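/- Let n ≥ 2 and let A be a symmetric positive definite real n×n matrix, written in block form A = [[a₁₁, a₁ᵀ],[a₁, Ã]] where a₁₁ ∈ ℝ, a₁ ∈ ℝ^{n−1} and Ã is the (n−1)×(n−1) submatrix of A obtained by deleting the first row and column. Then for every v ∈ ℝⁿ, writing ṽ ∈ ℝ^{n−1} for its last n−1 coordinates, one has ṽᵀÃ⁻¹ṽ ≤ vᵀA⁻¹v. In particular, taking A = Δ (a positive definite covariance matrix) this shows that deleting an observation cannot decrease the Gaussian-process posterior variance. -/

import Mathlib

open Matrix

lemma aux_posdef_sub (n : ℕ) (A : Matrix (Fin (n + 1)) (Fin (n + 1)) ℝ) (hA : A.PosDef) :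
    (A.submatrix Fin.succ Fin.succ).PosDef := by
  refine posDef_iff_dotProduct_mulVec.mpr ⟨?_, ?_⟩
  · have h := hA.isHermitian
    ext i j
    simpa using (congrFun (congrFun h j.succ) i.succ).symm
  · intro x hx
    have hu : (Fin.cons 0 x : Fin (n + 1) → ℝ) ≠ 0 := by
      intro h
      apply hx
      ext i
      simpa using congrFun h i.succ
    have h := hA.dotProduct_mulVec_pos hu
    simpa [dotProduct, mulVec, Fin.sum_univ_succ] using h

theorem stmt_0 (n : ℕ) (hn : 1 ≤ n)
    (A : Matrix (Fin (n + 1)) (Fin (n + 1)) ℝ) (hA : A.PosDef)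
    (v : Fin (n + 1) → ℝ) :
    (fun i : Fin n => v i.succ) ⬝ᵥ (A.submatrix Fin.succ Fin.succ)⁻¹ *ᵥ
        (fun i : Fin n => v i.succ)
      ≤ v ⬝ᵥ A⁻¹ *ᵥ v := by
  set B := A.submatrix Fin.succ Fin.succ with hB
  have hBpd : B.PosDef := aux_posdef_sub n A hA
  set vt : Fin n → ℝ := fun i => v i.succ with hvt
  set w : Fin n → ℝ := B⁻¹ *ᵥ vt with hw
  set u : Fin (n + 1) → ℝ := Fin.cons 0 w with hu
  have hAsymm : Aᵀ = A := hA.isHermitian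
  have hAinv : A * A⁻¹ = 1 := A.mul_nonsing_inv (Ne.isUnit hA.det_pos.ne')
  have hAinvA : A⁻¹ * A = 1 := A.nonsing_inv_mul (Ne.isUnit hA.det_pos.ne')
  have hBinv : B * B⁻¹ = 1 := B.mul_nonsing_inv (Ne.isUnit hBpd.det_pos.ne')
  -- key inequality: 2 u⬝v - u⬝Au ≤ v⬝A⁻¹v
  have key : 2 * (u ⬝ᵥ v) - u ⬝ᵥ A *ᵥ u ≤ v ⬝ᵥ A⁻¹ *ᵥ v := by
    set z : Fin (n + 1) → ℝ := A⁻¹ *ᵥ v with hz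
    have hAz : A *ᵥ z = v := by
      rw [hz, mulVec_mulVec, hAinv, one_mulVec]
    have h0 : 0 ≤ (u - z) ⬝ᵥ A *ᵥ (u - z) := by
      simpa using hA.posSemidef.dotProduct_mulVec_nonneg (u - z)
    have hzAu : z ⬝ᵥ A *ᵥ u = u ⬝ᵥ v := by
      rw [dotProduct_mulVec, ← mulVec_transpose, hAsymm, hAz, dotProduct_comm]
    have huAz : u ⬝ᵥ A *ᵥ z = u ⬝ᵥ v := by rw [hAz]
    have hzv : z ⬝ᵥ A *ᵥ z = v ⬝ᵥ A⁻¹ *ᵥ v := by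
      rw [hAz, dotProduct_comm]
    have hexp : (u - z) ⬝ᵥ A *ᵥ (u - z)
        = u ⬝ᵥ A *ᵥ u - 2 * (u ⬝ᵥ v) + v ⬝ᵥ A⁻¹ *ᵥ v := by
      rw [mulVec_sub, sub_dotProduct, dotProduct_sub, dotProduct_sub,
        hzAu, huAz, hzv]
      ring
    nlinarith [h0, hexp]
  -- compute the specific values
  have hBsymm : Bᵀ = B := hBpd.isHermitian
  have huv : u ⬝ᵥ v = vt ⬝ᵥ B⁻¹ *ᵥ vt := by
    have : u ⬝ᵥ v = w ⬝ᵥ vt := by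
      simp [hu, dotProduct, Fin.sum_univ_succ, hvt]
    rw [this, hw, dotProduct_comm]
  have huAu : u ⬝ᵥ A *ᵥ u = vt ⬝ᵥ B⁻¹ *ᵥ vt := by
    have h1 : u ⬝ᵥ A *ᵥ u = w ⬝ᵥ B *ᵥ w := by
      simp [hu, dotProduct, mulVec, hB, Fin.sum_univ_succ]
    have h2 : B *ᵥ w = vt := by
      rw [hw, mulVec_mulVec, hBinv, one_mulVec]
    rw [h1, h2, hw, dotProduct_comm]
  have := key
  rw [huv, huAu] at this
  linarith [this]
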